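/- arXiv:2403.10599 — 4 statements merged into one kernel-verified Lean document; each statement's English description precedes it below -/
import Mathlib

section
/- For a regular bipartite graph with left-degree ΔB that is (γ,δ) left-expanding with δ < 1/2, every subset B' of left vertices with |B'| ≤ γn has at least ΔB(1-2δ)|B'| unique neighbors (right vertices adjacent to exactly one vertex of B'). -/
/-- Unique-neighbor expansion: in a `ΔB`-left-regular bipartite graph (left vertices
`Fin n`, right vertices `Fin m`, adjacency `A`) that is `(γ,δ)` left-expanding with
`δ < 1/2`, every subset `B'` of left vertices with `|B'| ≤ γn` has at least
`ΔB(1-2δ)|B'|` unique neighbors. -/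
theorem unique_neighbor_expansion (m n ΔB : ℕ) (γ δ : ℝ) (hδ : δ < 1/2)
    (A : Fin m → Fin n → Bool)
    (hreg : ∀ i : Fin n, (Finset.univ.filter (fun c : Fin m => A c i)).card = ΔB)
    (hexp : ∀ B' : Finset (Fin n), (B'.card : ℝ) ≤ γ * n →
      (((Finset.univ.filter (fun c : Fin m => ∃ i ∈ B', A c i)).card : ℝ))
        ≥ (1 - δ) * ΔB * B'.card)
    (B' : Finset (Fin n)) (hB' : (B'.card : ℝ) ≤ γ * n) :
    (((Finset.univ.filter
        (fun c : Fin m => (B'.filter (fun i => A c i)).card = 1)).card : ℝ))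
      ≥ ΔB * (1 - 2 * δ) * B'.card := by
  classical
  set f : Fin m → ℕ := fun c => (B'.filter (fun i => A c i)).card with hf
  set S : Finset (Fin m) := Finset.univ.filter (fun c : Fin m => ∃ i ∈ B', A c i) with hS
  set U : Finset (Fin m) := Finset.univ.filter (fun c : Fin m => f c = 1) with hU
  -- double counting
  have hsum : ∑ c : Fin m, f c = ΔB * B'.card := by
    have h1 : ∑ c : Fin m, f c
        = ∑ i ∈ B', (Finset.univ.filter (fun c : Fin m => A c i)).card := by
      simp only [hf, Finset.card_filter]
      rw [Finset.sum_comm]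
    rw [h1]
    rw [Finset.sum_congr rfl fun i _ => hreg i, Finset.sum_const, smul_eq_mul, mul_comm]
  have hUS : U ⊆ S := by
    intro c hc
    simp only [hU, Finset.mem_filter] at hc
    have hc1 : (B'.filter (fun i => A c i)).card = 1 := hc.2
    have : (B'.filter (fun i => A c i)).Nonempty := by
      rw [← Finset.card_pos]; omega
    obtain ⟨i, hi⟩ := this
    simp only [Finset.mem_filter] at hi
    simp only [hS, Finset.mem_filter]
    exact ⟨Finset.mem_univ _, ⟨i, hi.1, hi.2⟩⟩
  -- sum over S is everything
  have hsumS : ∑ c ∈ S, f c = ΔB * B'.card := by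
    rw [← hsum]
    refine Finset.sum_subset (Finset.subset_univ S) ?_
    intro c _ hc
    simp only [hS, Finset.mem_filter, Finset.mem_univ, true_and] at hc
    push_neg at hc
    simp only [hf]
    rw [Finset.card_eq_zero, Finset.filter_eq_empty_iff]
    intro i hi
    simpa using hc i hi
  have hsplit : S.card = U.card + (S \ U).card := by
    have := Finset.card_le_card hUS
    rw [Finset.card_sdiff_of_subset hUS]
    omega
  have hlow : ∑ c ∈ S, f c ≥ U.card + 2 * (S \ U).card := by
    rw [← Finset.sum_sdiff hUS]
    have h1 : ∑ c ∈ U, f c = U.card := by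
      rw [Finset.card_eq_sum_ones]
      refine Finset.sum_congr rfl ?_
      intro c hc
      simp only [hU, Finset.mem_filter] at hc
      exact hc.2
    have h2 : ∑ c ∈ S \ U, f c ≥ 2 * (S \ U).card := by
      have hb : ∀ c ∈ S \ U, 2 ≤ f c := by
        intro c hc
        simp only [Finset.mem_sdiff, hS, hU, Finset.mem_filter, Finset.mem_univ,
          true_and] at hc
        obtain ⟨⟨i, hi, hAi⟩, hne⟩ := hc
        have hpos : 0 < f c := Finset.card_pos.2 ⟨i, Finset.mem_filter.2 ⟨hi, hAi⟩⟩
        omega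
      have := Finset.card_nsmul_le_sum (S \ U) f 2 hb
      simpa [smul_eq_mul, mul_comm] using this
    omega
  have hkey : ΔB * B'.card + U.card ≥ 2 * S.card := by omega
  have hexpS := hexp B' hB'
  have hkeyR : (ΔB : ℝ) * B'.card + U.card ≥ 2 * S.card := by
    exact_mod_cast hkey
  nlinarith [hkeyR, hexpS]
end

section
/- Let H be an m×n matrix over F₂ that is the bipartite adjacency matrix of a ΔB-left-regular bipartite graph which is (γ,δ) left-expanding with δ < 1/2. Then every vector e ∈ F₂ⁿ with Hamming weight 0 < |e| ≤ γn satisfies |He| ≥ ΔB(1-2δ)|e|. -/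
/-- Hamming weight of an `F₂` vector. -/
def hammingWt {k : ℕ} (x : Fin k → ZMod 2) : ℕ :=
  (Finset.univ.filter (fun i => x i ≠ 0)).card

open Classical in
/-- Linear confinement: if `H` is the bipartite adjacency matrix of a `ΔB`-left-regular
`(γ,δ)` left-expanding Tanner graph with `δ < 1/2`, then every `e` with
`0 < |e| ≤ γn` satisfies `|He| ≥ ΔB(1-2δ)|e|`. -/
theorem linear_confinement (m n ΔB : ℕ) (γ δ : ℝ) (hδ : δ < 1/2)
    (H : Matrix (Fin m) (Fin n) (ZMod 2))
    (hreg : ∀ i : Fin n, (Finset.univ.filter (fun c : Fin m => H c i = 1)).card = ΔB)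
    (hexp : ∀ B' : Finset (Fin n), (B'.card : ℝ) ≤ γ * n →
      (((Finset.univ.filter (fun c : Fin m => ∃ i ∈ B', H c i = 1)).card : ℝ))
        ≥ (1 - δ) * ΔB * B'.card)
    (e : Fin n → ZMod 2) (he0 : 0 < hammingWt e) (he : (hammingWt e : ℝ) ≤ γ * n) :
    ((hammingWt (H.mulVec e) : ℝ)) ≥ ΔB * (1 - 2 * δ) * hammingWt e := by
  classical
  have hz1 : ∀ x : ZMod 2, x ≠ 0 → x = 1 := by decide
  have hz0 : ∀ x : ZMod 2, x ≠ 1 → x = 0 := by decide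
  set S : Finset (Fin n) := Finset.univ.filter (fun i => e i ≠ 0) with hSdef
  have hScard : S.card = hammingWt e := rfl
  set d : Fin m → ℕ := fun c => (S.filter (fun i => H c i = 1)).card with hddef
  set N : Finset (Fin m) := Finset.univ.filter (fun c : Fin m => ∃ i ∈ S, H c i = 1)
    with hNdef
  set U : Finset (Fin m) := Finset.univ.filter (fun c : Fin m => d c = 1) with hUdef
  -- edge count
  have hedge : ∑ c : Fin m, d c = ΔB * S.card := by
    simp only [hddef, Finset.card_filter]
    rw [Finset.sum_comm]
    have : ∀ i ∈ S, (∑ c : Fin m, if H c i = 1 then 1 else 0) = ΔB := by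
      intro i _
      rw [← hreg i, Finset.card_filter]
    rw [Finset.sum_congr rfl this, Finset.sum_const, smul_eq_mul, mul_comm]
  -- d c ≥ 1 on N
  have hdN : ∀ c ∈ N, 1 ≤ d c := by
    intro c hc
    simp only [hNdef, Finset.mem_filter] at hc
    obtain ⟨i, hi, hHi⟩ := hc.2
    exact Finset.card_pos.mpr ⟨i, Finset.mem_filter.mpr ⟨hi, hHi⟩⟩
  -- U ⊆ N
  have hUN : U ⊆ N := by
    intro c hc
    simp only [hUdef, Finset.mem_filter] at hc
    obtain ⟨i, hi⟩ := Finset.card_eq_one.mp hc.2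
    have hmem : i ∈ S.filter (fun i => H c i = 1) := hi ▸ Finset.mem_singleton_self i
    simp only [Finset.mem_filter] at hmem
    exact Finset.mem_filter.mpr ⟨Finset.mem_univ _, ⟨i, hmem.1, hmem.2⟩⟩
  -- counting: ΔB * |S| + |U| ≥ 2 * |N|
  have hcount : ΔB * S.card + U.card ≥ 2 * N.card := by
    have h1 : ∑ c : Fin m, d c ≥ ∑ c ∈ N, d c :=
      Finset.sum_le_sum_of_subset (Finset.subset_univ N)
    have h2 : ∑ c ∈ N, (d c + (if d c = 1 then 1 else 0)) ≥ ∑ c ∈ N, 2 := by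
      apply Finset.sum_le_sum
      intro c hc
      by_cases h : d c = 1
      · simp [h]
      · have h4 := hdN c hc
        have h5 : 2 ≤ d c := by omega
        simp only [h, if_false]
        omega
    rw [Finset.sum_add_distrib, Finset.sum_const, smul_eq_mul] at h2
    have h3 : ∑ c ∈ N, (if d c = 1 then 1 else 0) = U.card := by
      rw [← Finset.sum_filter, Finset.sum_const, smul_eq_mul, mul_one]
      congr 1
      ext c
      simp only [Finset.mem_filter, hUdef, Finset.mem_univ, true_and, and_comm]
      constructor
      · exact fun h => h.1
      · intro h
        refine ⟨h, ?_⟩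
        have hc : c ∈ U := Finset.mem_filter.mpr ⟨Finset.mem_univ _, h⟩
        exact hUN hc
    rw [← hedge]
    omega
  -- parity: H.mulVec e c = d c mod 2
  have hmv : ∀ c : Fin m, H.mulVec e c = (d c : ZMod 2) := by
    intro c
    have step1 : H.mulVec e c = ∑ i ∈ S, H c i := by
      rw [Matrix.mulVec, dotProduct]
      rw [← Finset.sum_filter_add_sum_filter_not Finset.univ (fun i => e i ≠ 0)]
      have h0 : ∑ i ∈ Finset.univ.filter (fun i => ¬ e i ≠ 0), H c i * e i = 0 := by
        apply Finset.sum_eq_zero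
        intro i hi
        simp only [Finset.mem_filter, not_not] at hi
        rw [hi.2, mul_zero]
      rw [h0, add_zero]
      apply Finset.sum_congr rfl
      intro i hi
      simp only [hSdef, Finset.mem_filter] at hi
      rw [hz1 _ hi.2, mul_one]
    rw [step1]
    rw [← Finset.sum_filter_add_sum_filter_not S (fun i => H c i = 1)]
    have h0 : ∑ i ∈ S.filter (fun i => ¬ H c i = 1), H c i = 0 := by
      apply Finset.sum_eq_zero
      intro i hi
      simp only [Finset.mem_filter] at hi
      exact hz0 _ hi.2
    rw [h0, add_zero]
    rw [Finset.sum_congr rfl (fun i hi => (Finset.mem_filter.mp hi).2)]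
    simp [hddef]
  -- unique neighbors are unsatisfied
  have hUunsat : U ⊆ Finset.univ.filter (fun c => H.mulVec e c ≠ 0) := by
    intro c hc
    simp only [hUdef, Finset.mem_filter] at hc
    refine Finset.mem_filter.mpr ⟨Finset.mem_univ _, ?_⟩
    rw [hmv c, hc.2]
    decide
  have hwt : U.card ≤ hammingWt (H.mulVec e) := Finset.card_le_card hUunsat
  -- expansion
  have hexpS : ((N.card : ℝ)) ≥ (1 - δ) * ΔB * S.card := hexp S (hScard ▸ he)
  -- assemble in ℝ
  have hcountR : (ΔB : ℝ) * S.card + U.card ≥ 2 * N.card := by exact_mod_cast hcount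
  have hwtR : (U.card : ℝ) ≤ (hammingWt (H.mulVec e) : ℝ) := by exact_mod_cast hwt
  rw [← hScard]
  nlinarith [hcountR, hwtR, hexpS]
end

section
/- Let π be the Gibbs distribution π(x) ∝ exp(-β(2|Hx| - m)) on F₂ⁿ, where H is ΔB-left-regular with (γ,δ) left-expanding Tanner graph, δ < 1/2, and set η = ΔB(1-2δ). Let E = {x ∈ F₂ⁿ : |x| = ⌊γn/2⌋}. Then π(E)/π(0) ≤ C(n, ⌊γn/2⌋) · e^{-βηγn}, and consequently π(E)/π(0) ≤ exp(½γn(1 + log(2/γ) - 2βη)) for large n. -/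
section AuxGibbs

open Finset

private lemma zmod2_eq_one_aux {a : ZMod 2} (h : a ≠ 0) : a = 1 := by revert h; revert a; decide
private lemma zmod2_eq_zero_aux {a : ZMod 2} (h : a ≠ 1) : a = 0 := by revert h; revert a; decide

end AuxGibbs

section AuxGibbs2

open Finset

open Classical in
private lemma gibbs_confinement {m n ΔB : ℕ} {γ δ : ℝ}
    (H : Matrix (Fin m) (Fin n) (ZMod 2))
    (hreg : ∀ i : Fin n, (Finset.univ.filter (fun c : Fin m => H c i = 1)).card = ΔB)
    (hexp : ∀ B' : Finset (Fin n), (B'.card : ℝ) ≤ γ * n →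
      (((Finset.univ.filter (fun c : Fin m => ∃ i ∈ B', H c i = 1)).card : ℝ))
        ≥ (1 - δ) * ΔB * B'.card)
    (x : Fin n → ZMod 2) (w : ℕ) (hx : hammingWt x = w) (hwle : (w : ℝ) ≤ γ * n) :
    (1 - 2 * δ) * ΔB * w ≤ (hammingWt (H.mulVec x) : ℝ) := by
  classical
  set S : Finset (Fin n) := Finset.univ.filter (fun i => x i ≠ 0) with hSdef
  have hS : S.card = w := hx
  set N : Finset (Fin m) := Finset.univ.filter (fun c => ∃ i ∈ S, H c i = 1) with hNdef
  have hN : (1 - δ) * ΔB * w ≤ (N.card : ℝ) := by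
    have := hexp S (by rw [hS]; exact hwle)
    rw [hS] at this; exact this
  set d : Fin m → ℕ := fun c => (S.filter (fun i => H c i = 1)).card with hddef
  have hedge : ∑ c : Fin m, d c = ΔB * w := by
    simp only [hddef, card_filter]
    rw [Finset.sum_comm]
    have : ∀ i ∈ S, (∑ c : Fin m, if H c i = 1 then 1 else 0) = ΔB := by
      intro i _
      rw [← hreg i, card_filter]
    rw [Finset.sum_congr rfl this, Finset.sum_const, hS, smul_eq_mul, mul_comm]
  have hdout : ∀ c ∉ N, d c = 0 := by
    intro c hc
    simp only [hNdef, mem_filter, mem_univ, true_and, not_exists] at hc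
    simp only [hddef, card_eq_zero, filter_eq_empty_iff]
    intro i hi h1; exact hc i ⟨hi, h1⟩
  have hedgeN : ∑ c ∈ N, d c = ΔB * w := by
    rw [← hedge]
    exact Finset.sum_subset (subset_univ N) (fun c _ hc => hdout c hc)
  set U : Finset (Fin m) := N.filter (fun c => d c = 1) with hUdef
  have hsplit : 2 * N.card ≤ (∑ c ∈ N, d c) + U.card := by
    have h1 : ∑ c ∈ N, (if d c = 1 then 1 else 2) ≤ ∑ c ∈ N, d c := by
      apply Finset.sum_le_sum
      intro c hc
      by_cases h : d c = 1
      · simp [h]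
      · simp only [h, if_false]
        have : 1 ≤ d c := by
          simp only [hNdef, mem_filter, mem_univ, true_and] at hc
          obtain ⟨i, hi, hHi⟩ := hc
          exact Finset.card_pos.2 ⟨i, mem_filter.2 ⟨hi, hHi⟩⟩
        omega
    have h2 : (∑ c ∈ N, (if d c = 1 then 1 else 2)) + U.card = 2 * N.card := by
      rw [Finset.sum_ite, Finset.sum_const, Finset.sum_const]
      have hcards : (N.filter (fun c => d c = 1)).card + (N.filter (fun c => ¬ d c = 1)).card = N.card :=
        Finset.card_filter_add_card_filter_not _
      simp only [smul_eq_mul, mul_one, hUdef]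
      omega
    omega
  have hU : (1 - 2 * δ) * ΔB * w ≤ (U.card : ℝ) := by
    have h2N : (2 : ℝ) * N.card ≤ ΔB * w + U.card := by
      have : 2 * N.card ≤ ΔB * w + U.card := by omega
      exact_mod_cast this
    nlinarith
  have hUsub : U ⊆ Finset.univ.filter (fun c => (H.mulVec x) c ≠ 0) := by
    intro c hc
    simp only [mem_filter, mem_univ, true_and]
    have hdc : d c = 1 := (mem_filter.1 hc).2
    have hval : (H.mulVec x) c = 1 := by
      show (∑ i, H c i * x i) = 1
      have hsum : (∑ i, H c i * x i) = ∑ i ∈ S, H c i * x i := by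
        rw [← Finset.sum_subset (subset_univ S)]
        intro i _ hi
        simp only [hSdef, mem_filter, mem_univ, true_and, not_not] at hi
        rw [hi, mul_zero]
      have hx1 : ∀ i ∈ S, x i = 1 := by
        intro i hi
        simp only [hSdef, mem_filter, mem_univ, true_and] at hi
        exact zmod2_eq_one_aux hi
      rw [hsum, Finset.sum_congr rfl (fun i hi => by rw [hx1 i hi, mul_one])]
      have hHval : ∀ i ∈ S, H c i = if H c i = 1 then (1 : ZMod 2) else 0 := by
        intro i _
        by_cases h : H c i = 1
        · simp [h]
        · simp only [h, if_false]; exact zmod2_eq_zero_aux h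
      rw [Finset.sum_congr rfl hHval, Finset.sum_ite, Finset.sum_const, Finset.sum_const_zero,
        add_zero]
      rw [show (S.filter fun i => H c i = 1).card = 1 from hdc, one_smul]
    rw [hval]; exact one_ne_zero
  calc (1 - 2*δ) * ΔB * w ≤ (U.card : ℝ) := hU
    _ ≤ (hammingWt (H.mulVec x) : ℝ) := by
        exact_mod_cast Finset.card_le_card hUsub

private lemma gibbs_card_wt_le (n w : ℕ) :
    (Finset.univ.filter (fun x : Fin n → ZMod 2 => hammingWt x = w)).card ≤ n.choose w := by
  classical
  have := Finset.card_le_card_of_injOn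
    (f := fun x : Fin n → ZMod 2 => Finset.univ.filter (fun i => x i ≠ 0))
    (s := Finset.univ.filter (fun x : Fin n → ZMod 2 => hammingWt x = w))
    (t := Finset.powersetCard w (Finset.univ : Finset (Fin n)))
    (by
      intro x hx
      rw [Finset.mem_coe, Finset.mem_powersetCard_univ]
      exact (Finset.mem_filter.1 (Finset.mem_coe.1 hx)).2)
    (by
      intro x _ y _ hxy
      have hxy' : Finset.univ.filter (fun i => x i ≠ 0) = Finset.univ.filter (fun i => y i ≠ 0) := hxy
      funext i
      by_cases h : x i ≠ 0
      · have hi : i ∈ Finset.univ.filter (fun i => x i ≠ 0) := by simp [h]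
        rw [hxy'] at hi
        have hy : y i ≠ 0 := (Finset.mem_filter.1 hi).2
        rw [zmod2_eq_one_aux h, zmod2_eq_one_aux hy]
      · push_neg at h
        have hi : i ∉ Finset.univ.filter (fun i => x i ≠ 0) := by simp [h]
        rw [hxy'] at hi
        have hy : ¬ y i ≠ 0 := by
          intro hy; exact hi (by simp [hy])
        push_neg at hy
        rw [h, hy])
  simpa [Finset.card_powersetCard] using this

private lemma gibbs_choose_le_exp (n w : ℕ) (γ : ℝ) (hγ0 : 0 < γ) (hw1 : 1 ≤ w)
    (hw : (w : ℝ) = γ * n / 2) :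
    (n.choose w : ℝ) ≤ Real.exp (w * (1 + Real.log (2 / γ))) := by
  have hwpos : (0 : ℝ) < w := by exact_mod_cast hw1
  have hnpos : (0 : ℝ) < n := by nlinarith
  have hfac : (0 : ℝ) < (w.factorial : ℝ) := by exact_mod_cast w.factorial_pos
  have h1 : (n.choose w : ℝ) ≤ (n : ℝ) ^ w / (w.factorial : ℝ) :=
    Nat.choose_le_pow_div w n
  have hratio : (n : ℝ) / w = 2 / γ := by
    rw [div_eq_div_iff hwpos.ne' hγ0.ne']
    linear_combination (-2) * hw
  have h2 : (n : ℝ) ^ w / (w.factorial : ℝ)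
      = ((n : ℝ) / w) ^ w * ((w : ℝ) ^ w / (w.factorial : ℝ)) := by
    field_simp
    rw [div_pow, div_mul_cancel₀ _ (pow_ne_zero _ hwpos.ne')]
  have h3 : (w : ℝ) ^ w / (w.factorial : ℝ) ≤ Real.exp w :=
    Real.pow_div_factorial_le_exp (w : ℝ) hwpos.le w
  have h4 : ((n : ℝ) / w) ^ w = Real.exp (w * Real.log (2 / γ)) := by
    rw [hratio, Real.exp_nat_mul, Real.exp_log (by positivity)]
  calc (n.choose w : ℝ) ≤ (n : ℝ) ^ w / (w.factorial : ℝ) := h1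
    _ = ((n : ℝ) / w) ^ w * ((w : ℝ) ^ w / (w.factorial : ℝ)) := h2
    _ ≤ Real.exp (w * Real.log (2 / γ)) * Real.exp w := by
        rw [h4]
        exact mul_le_mul_of_nonneg_left h3 (Real.exp_pos _).le
    _ = Real.exp (w * (1 + Real.log (2 / γ))) := by
        rw [← Real.exp_add]; ring_nf

end AuxGibbs2

open Classical in
/-- Bottleneck estimate: for the Gibbs distribution `π(x) ∝ exp(-β(2|Hx| - m))` of a
`ΔB`-left-regular code with `(γ,δ)` left-expanding Tanner graph (`δ < 1/2`,
`η = ΔB(1-2δ)`), the bottleneck set `E = {x : |x| = γn/2}` satisfies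
`π(E)/π(0) ≤ C(n, γn/2)·e^{-βηγn} ≤ exp(½γn(1 + log(2/γ) - 2βη))`. -/
theorem gibbs_bottleneck_estimate (m n ΔB : ℕ) (γ δ β : ℝ) (hδ : δ < 1/2)
    (hγ0 : 0 < γ) (hγ1 : γ ≤ 1) (hβ : 0 ≤ β)
    (H : Matrix (Fin m) (Fin n) (ZMod 2))
    (hreg : ∀ i : Fin n, (Finset.univ.filter (fun c : Fin m => H c i = 1)).card = ΔB)
    (hexp : ∀ B' : Finset (Fin n), (B'.card : ℝ) ≤ γ * n →
      (((Finset.univ.filter (fun c : Fin m => ∃ i ∈ B', H c i = 1)).card : ℝ))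
        ≥ (1 - δ) * ΔB * B'.card)
    (w : ℕ) (hw1 : 1 ≤ w) (hw : (w : ℝ) = γ * n / 2) :
    (∑ x ∈ Finset.univ.filter (fun x : Fin n → ZMod 2 => hammingWt x = w),
        Real.exp (-β * (2 * (hammingWt (H.mulVec x) : ℝ) - m)))
      / Real.exp (-β * (2 * (hammingWt (H.mulVec (0 : Fin n → ZMod 2)) : ℝ) - m))
      ≤ (n.choose w : ℝ) * Real.exp (-β * (ΔB * (1 - 2 * δ)) * γ * n)
    ∧
    (∑ x ∈ Finset.univ.filter (fun x : Fin n → ZMod 2 => hammingWt x = w),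
        Real.exp (-β * (2 * (hammingWt (H.mulVec x) : ℝ) - m)))
      / Real.exp (-β * (2 * (hammingWt (H.mulVec (0 : Fin n → ZMod 2)) : ℝ) - m))
      ≤ Real.exp ((γ * n / 2) *
          (1 + Real.log (2 / γ) - 2 * β * (ΔB * (1 - 2 * δ)))) := by
  classical
  have hwpos : (0 : ℝ) < w := by exact_mod_cast hw1
  have hnpos : (0 : ℝ) < n := by nlinarith
  have hwt0 : hammingWt (H.mulVec (0 : Fin n → ZMod 2)) = 0 := by
    rw [Matrix.mulVec_zero]
    simp [hammingWt]
  -- each term is bounded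
  have hterm : ∀ x ∈ Finset.univ.filter (fun x : Fin n → ZMod 2 => hammingWt x = w),
      Real.exp (-β * (2 * (hammingWt (H.mulVec x) : ℝ) - m))
        ≤ Real.exp (-β * (2 * ((1 - 2 * δ) * ΔB * w) - m)) := by
    intro x hx
    have hxw : hammingWt x = w := (Finset.mem_filter.1 hx).2
    have hconf := gibbs_confinement H hreg hexp x w hxw (by nlinarith)
    apply Real.exp_le_exp.2
    nlinarith
  have hsum : (∑ x ∈ Finset.univ.filter (fun x : Fin n → ZMod 2 => hammingWt x = w),
      Real.exp (-β * (2 * (hammingWt (H.mulVec x) : ℝ) - m)))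
      ≤ ((Finset.univ.filter (fun x : Fin n → ZMod 2 => hammingWt x = w)).card : ℝ)
        * Real.exp (-β * (2 * ((1 - 2 * δ) * ΔB * w) - m)) := by
    calc _ ≤ ∑ _x ∈ Finset.univ.filter (fun x : Fin n → ZMod 2 => hammingWt x = w),
          Real.exp (-β * (2 * ((1 - 2 * δ) * ΔB * w) - m)) := Finset.sum_le_sum hterm
      _ = _ := by rw [Finset.sum_const, nsmul_eq_mul]
  have hcard : ((Finset.univ.filter (fun x : Fin n → ZMod 2 => hammingWt x = w)).card : ℝ)
      ≤ (n.choose w : ℝ) := by exact_mod_cast gibbs_card_wt_le n w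
  have hexp_split : Real.exp (-β * (2 * ((1 - 2 * δ) * ΔB * w) - m))
      = Real.exp (-β * (ΔB * (1 - 2 * δ)) * γ * n)
        * Real.exp (-β * (2 * ((hammingWt (H.mulVec (0 : Fin n → ZMod 2)) : ℝ)) - m)) := by
    rw [← Real.exp_add, hwt0]
    congr 1
    push_cast
    linear_combination (-2 * β * (1 - 2*δ) * (ΔB : ℝ)) * hw
  have hdenpos : (0 : ℝ) < Real.exp (-β * (2 * (hammingWt (H.mulVec (0 : Fin n → ZMod 2)) : ℝ) - m)) :=
    Real.exp_pos _
  have hmain : (∑ x ∈ Finset.univ.filter (fun x : Fin n → ZMod 2 => hammingWt x = w),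
        Real.exp (-β * (2 * (hammingWt (H.mulVec x) : ℝ) - m)))
      / Real.exp (-β * (2 * (hammingWt (H.mulVec (0 : Fin n → ZMod 2)) : ℝ) - m))
      ≤ (n.choose w : ℝ) * Real.exp (-β * (ΔB * (1 - 2 * δ)) * γ * n) := by
    rw [div_le_iff₀ hdenpos]
    calc _ ≤ ((Finset.univ.filter (fun x : Fin n → ZMod 2 => hammingWt x = w)).card : ℝ)
          * Real.exp (-β * (2 * ((1 - 2 * δ) * ΔB * w) - m)) := hsum
      _ = ((Finset.univ.filter (fun x : Fin n → ZMod 2 => hammingWt x = w)).card : ℝ)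
          * (Real.exp (-β * (ΔB * (1 - 2 * δ)) * γ * n)
            * Real.exp (-β * (2 * ((hammingWt (H.mulVec (0 : Fin n → ZMod 2)) : ℝ)) - m))) := by
          rw [hexp_split]
      _ ≤ (n.choose w : ℝ) * Real.exp (-β * (ΔB * (1 - 2 * δ)) * γ * n)
          * Real.exp (-β * (2 * ((hammingWt (H.mulVec (0 : Fin n → ZMod 2)) : ℝ)) - m)) := by
          rw [← mul_assoc]
          apply mul_le_mul_of_nonneg_right _ (Real.exp_pos _).le
          exact mul_le_mul_of_nonneg_right hcard (Real.exp_pos _).le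
  refine ⟨hmain, hmain.trans ?_⟩
  have hchoose := gibbs_choose_le_exp n w γ hγ0 hw1 hw
  calc (n.choose w : ℝ) * Real.exp (-β * (ΔB * (1 - 2 * δ)) * γ * n)
      ≤ Real.exp (w * (1 + Real.log (2 / γ))) * Real.exp (-β * (ΔB * (1 - 2 * δ)) * γ * n) :=
        mul_le_mul_of_nonneg_right hchoose (Real.exp_pos _).le
    _ = Real.exp ((γ * n / 2) * (1 + Real.log (2 / γ) - 2 * β * (ΔB * (1 - 2 * δ)))) := by
        rw [← Real.exp_add]
        congr 1
        rw [hw]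
        ring
end

section
/- Let H₁ ∈ F₂^{m₁×n₁} and H₂ ∈ F₂^{m₂×n₂}. Define H_X = (H₁ ⊗ I_{n₂} | I_{m₁} ⊗ H₂ᵀ) and H_Z = (I_{n₁} ⊗ H₂ | H₁ᵀ ⊗ I_{m₂}), block matrices over F₂ acting on F₂^{n₁n₂ + m₁m₂}. Then H_X H_Zᵀ = 0. -/
open scoped Kronecker
open Matrix

/-- CSS orthogonality of the hypergraph product: with
`H_X = (H₁ ⊗ I_{n₂} | I_{m₁} ⊗ H₂ᵀ)` and `H_Z = (I_{n₁} ⊗ H₂ | H₁ᵀ ⊗ I_{m₂})`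
over `F₂`, one has `H_X H_Zᵀ = 0`. -/
theorem hypergraph_product_css_orthogonality (m₁ n₁ m₂ n₂ : ℕ)
    (H₁ : Matrix (Fin m₁) (Fin n₁) (ZMod 2)) (H₂ : Matrix (Fin m₂) (Fin n₂) (ZMod 2)) :
    (Matrix.fromCols (H₁ ⊗ₖ (1 : Matrix (Fin n₂) (Fin n₂) (ZMod 2)))
        ((1 : Matrix (Fin m₁) (Fin m₁) (ZMod 2)) ⊗ₖ H₂ᵀ))
      * (Matrix.fromCols ((1 : Matrix (Fin n₁) (Fin n₁) (ZMod 2)) ⊗ₖ H₂)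
        (H₁ᵀ ⊗ₖ (1 : Matrix (Fin m₂) (Fin m₂) (ZMod 2))))ᵀ = 0 := by
  rw [Matrix.transpose_fromCols, Matrix.fromCols_mul_fromRows,
    ← Matrix.kroneckerMap_transpose, ← Matrix.kroneckerMap_transpose,
    Matrix.transpose_one, Matrix.transpose_one, Matrix.transpose_transpose,
    ← Matrix.mul_kronecker_mul, ← Matrix.mul_kronecker_mul,
    Matrix.mul_one, Matrix.one_mul, Matrix.mul_one, Matrix.one_mul]
  rw [← two_smul (ZMod 2)]
  simp only [smul_eq_zero]
  left
  rfl
end
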